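/- Let G be a co-biconvex graph without universal vertices with clique partition (C₁, C₂), auxiliary interval graphs H₁, H₂ with independence numbers α₁, α₂. If α₁ + α₂ = k and |Cᵢ| ≥ αᵢ + 1 for i = 1,2, then γ_{×k}(G) = k + 2. -/

import Mathlib

open Set

def closedNbhd {V : Type*} (G : SimpleGraph V) (v : V) : Set V :=
  insert v (G.neighborSet v)

def IsKTupleDomSet {V : Type*} (G : SimpleGraph V) (k : ℕ) (D : Set V) : Prop :=
  ∀ v : V, k ≤ (closedNbhd G v ∩ D).ncard

noncomputable def ktupleDomNum {V : Type*} (G : SimpleGraph V) (k : ℕ) : ℕ :=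
  sInf {d | ∃ D : Set V, IsKTupleDomSet G k D ∧ D.ncard = d}

def IsUniversal {V : Type*} (G : SimpleGraph V) (u : V) : Prop :=
  ∀ w : V, w ≠ u → G.Adj u w

def auxGraph {V : Type*} (G : SimpleGraph V) (C₁ C₂ : Set V) : SimpleGraph V where
  Adj a b := a ≠ b ∧ a ∈ C₁ ∧ b ∈ C₁ ∧ ∃ v ∈ C₂, ¬ G.Adj v a ∧ ¬ G.Adj v b
  symm := ⟨by rintro a b ⟨h, ha, hb, v, hv, h1, h2⟩; exact ⟨h.symm, hb, ha, v, hv, h2, h1⟩⟩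
  loopless := ⟨fun a h => h.1 rfl⟩

def IsStableIn {V : Type*} (H : SimpleGraph V) (S : Set V) : Prop :=
  S.Pairwise fun a b => ¬ H.Adj a b

noncomputable def indepNumOn {V : Type*} (H : SimpleGraph V) (C : Set V) : ℕ :=
  sSup {d | ∃ S ⊆ C, IsStableIn H S ∧ S.ncard = d}

/-! ### Auxiliary lemmas -/

lemma mem_closedNbhd {V : Type*} {G : SimpleGraph V} {v w : V} :
    w ∈ closedNbhd G v ↔ w = v ∨ G.Adj v w := by
  simp [closedNbhd]

lemma indep_bddAbove {V : Type*} [Fintype V] (H : SimpleGraph V) (C : Set V) :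
    BddAbove {d | ∃ S ⊆ C, IsStableIn H S ∧ S.ncard = d} := by
  refine ⟨Fintype.card V, ?_⟩
  rintro d ⟨S, _, _, rfl⟩
  have := Set.ncard_le_ncard (subset_univ S) (Set.toFinite _)
  rwa [Set.ncard_univ, Nat.card_eq_fintype_card] at this

lemma stable_le_indepNumOn {V : Type*} [Fintype V] {H : SimpleGraph V} {C S : Set V}
    (hSC : S ⊆ C) (hS : IsStableIn H S) : S.ncard ≤ indepNumOn H C :=
  le_csSup (indep_bddAbove H C) ⟨S, hSC, hS, rfl⟩

lemma exists_max_stable {V : Type*} [Fintype V] (H : SimpleGraph V) (C : Set V) :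
    ∃ S ⊆ C, IsStableIn H S ∧ S.ncard = indepNumOn H C := by
  have hne : {d | ∃ S ⊆ C, IsStableIn H S ∧ S.ncard = d}.Nonempty :=
    ⟨0, ∅, empty_subset _, fun a ha => absurd ha (notMem_empty a), Set.ncard_empty _⟩
  have := Nat.sSup_mem hne (indep_bddAbove H C)
  exact this

lemma one_le_indepNumOn {V : Type*} [Fintype V] (H : SimpleGraph V) {C : Set V}
    (hC : C.Nonempty) : 1 ≤ indepNumOn H C := by
  obtain ⟨c, hc⟩ := hC
  refine le_csSup (indep_bddAbove H C) ⟨{c}, singleton_subset_iff.2 hc, ?_, ncard_singleton c⟩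
  exact Set.pairwise_singleton _ _

/-- Key counting lemma: if `T` consists of vertices of `D ∩ C₁` outside the closed
neighborhood of `v ∈ C₂`, then `k + |T| ≤ |D|`. -/
lemma key_count {V : Type*} [Fintype V] {G : SimpleGraph V} {C₁ C₂ : Set V}
    (hpart : C₁ ∪ C₂ = Set.univ) (hdisj : Disjoint C₁ C₂) {D : Set V} {k : ℕ}
    (hD : IsKTupleDomSet G k D) {v : V} (hv : v ∈ C₂)
    {T : Set V} (hT : T ⊆ (D ∩ C₁) \ closedNbhd G v) :
    k + T.ncard ≤ D.ncard := by
  have h1 : closedNbhd G v ∩ D ⊆ (D ∩ C₁ ∩ closedNbhd G v) ∪ (D ∩ C₂) := by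
    rintro x ⟨hx1, hx2⟩
    have : x ∈ C₁ ∪ C₂ := by rw [hpart]; trivial
    rcases this with h | h
    · exact Or.inl ⟨⟨hx2, h⟩, hx1⟩
    · exact Or.inr ⟨hx2, h⟩
  have hk : k ≤ (D ∩ C₁ ∩ closedNbhd G v).ncard + (D ∩ C₂).ncard :=
    (hD v).trans ((Set.ncard_le_ncard h1 (Set.toFinite _)).trans
      (Set.ncard_union_le _ _))
  have h2 : (D ∩ C₁ ∩ closedNbhd G v) ∪ T ⊆ D ∩ C₁ := by
    rintro x (⟨hx, _⟩ | hx)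
    · exact hx
    · exact (hT hx).1
  have hdisjT : Disjoint (D ∩ C₁ ∩ closedNbhd G v) T := by
    rw [Set.disjoint_left]
    rintro x ⟨_, hx2⟩ hxT
    exact (hT hxT).2 hx2
  have h3 : (D ∩ C₁ ∩ closedNbhd G v).ncard + T.ncard ≤ (D ∩ C₁).ncard := by
    rw [← Set.ncard_union_eq hdisjT (Set.toFinite _) (Set.toFinite _)]
    exact Set.ncard_le_ncard h2 (Set.toFinite _)
  have h4 : (D ∩ C₁).ncard + (D ∩ C₂).ncard = D.ncard := by
    rw [← Set.ncard_union_eq ?_ (Set.toFinite _) (Set.toFinite _)]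
    · congr 1
      ext x
      constructor
      · rintro (⟨h, _⟩ | ⟨h, _⟩) <;> exact h
      · intro hx
        have : x ∈ C₁ ∪ C₂ := by rw [hpart]; trivial
        rcases this with h | h
        · exact Or.inl ⟨hx, h⟩
        · exact Or.inr ⟨hx, h⟩
    · exact hdisj.mono Set.inter_subset_right Set.inter_subset_right
  omega

/-- If `D` is a `k`-tuple dominating set of size `≤ k+1`, then `D ∩ C₁` is stable in the
auxiliary graph. -/
lemma stable_of_small {V : Type*} [Fintype V] {G : SimpleGraph V} {C₁ C₂ : Set V}
    (hpart : C₁ ∪ C₂ = Set.univ) (hdisj : Disjoint C₁ C₂) {D : Set V} {k : ℕ}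
    (hD : IsKTupleDomSet G k D) (hcard : D.ncard ≤ k + 1) :
    IsStableIn (auxGraph G C₁ C₂) (D ∩ C₁) := by
  intro a ha b hb hab hadj
  obtain ⟨_, haC, hbC, v, hv, h1, h2⟩ := hadj
  have hT : ({a, b} : Set V) ⊆ (D ∩ C₁) \ closedNbhd G v := by
    rintro x (rfl | rfl)
    · refine ⟨ha, ?_⟩
      rw [mem_closedNbhd]
      rintro (rfl | h)
      · exact Set.disjoint_left.1 hdisj haC hv
      · exact h1 h
    · refine ⟨hb, ?_⟩
      rw [mem_closedNbhd]
      rintro (rfl | h)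
      · exact Set.disjoint_left.1 hdisj hbC hv
      · exact h2 h
  have := key_count hpart hdisj hD hv hT
  rw [Set.ncard_pair hab] at this
  omega

/-- If `D` is a `k`-tuple dominating set of size `≤ k`, then every `v ∈ C₂` is adjacent to
every vertex of `D ∩ C₁`. -/
lemma adj_all_of_small {V : Type*} [Fintype V] {G : SimpleGraph V} {C₁ C₂ : Set V}
    (hpart : C₁ ∪ C₂ = Set.univ) (hdisj : Disjoint C₁ C₂) {D : Set V} {k : ℕ}
    (hD : IsKTupleDomSet G k D) (hcard : D.ncard ≤ k) {v : V} (hv : v ∈ C₂)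
    {a : V} (ha : a ∈ D ∩ C₁) : G.Adj v a := by
  by_contra hadj
  have hT : ({a} : Set V) ⊆ (D ∩ C₁) \ closedNbhd G v := by
    rintro x rfl
    refine ⟨ha, ?_⟩
    rw [mem_closedNbhd]
    rintro (rfl | h)
    · exact Set.disjoint_left.1 hdisj ha.2 hv
    · exact hadj h
  have := key_count hpart hdisj hD hv hT
  rw [Set.ncard_singleton] at this
  omega

/-- Lower bound: every `k`-tuple dominating set has size at least `k+2`. -/
lemma lower_bound {V : Type*} [Fintype V] {G : SimpleGraph V} {C₁ C₂ : Set V}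
    (hpart : C₁ ∪ C₂ = Set.univ) (hdisj : Disjoint C₁ C₂)
    (hne1 : C₁.Nonempty) (hne2 : C₂.Nonempty)
    (hc1 : G.IsClique C₁) (hc2 : G.IsClique C₂)
    (hnouniv : ∀ v : V, ¬ IsUniversal G v) {k : ℕ}
    (hsum : indepNumOn (auxGraph G C₁ C₂) C₁ + indepNumOn (auxGraph G C₂ C₁) C₂ = k)
    {D : Set V} (hD : IsKTupleDomSet G k D) : k + 2 ≤ D.ncard := by
  by_contra hlt
  push_neg at hlt
  have hcard : D.ncard ≤ k + 1 := by omega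
  have hpart' : C₂ ∪ C₁ = Set.univ := by rw [Set.union_comm]; exact hpart
  -- D ∩ C₁ and D ∩ C₂ are stable
  have hs1 : IsStableIn (auxGraph G C₁ C₂) (D ∩ C₁) := stable_of_small hpart hdisj hD hcard
  have hs2 : IsStableIn (auxGraph G C₂ C₁) (D ∩ C₂) := stable_of_small hpart' hdisj.symm hD hcard
  have hd1 : (D ∩ C₁).ncard ≤ indepNumOn (auxGraph G C₁ C₂) C₁ :=
    stable_le_indepNumOn Set.inter_subset_right hs1
  have hd2 : (D ∩ C₂).ncard ≤ indepNumOn (auxGraph G C₂ C₁) C₂ :=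
    stable_le_indepNumOn Set.inter_subset_right hs2
  have hsplit : (D ∩ C₁).ncard + (D ∩ C₂).ncard = D.ncard := by
    rw [← Set.ncard_union_eq ?_ (Set.toFinite _) (Set.toFinite _)]
    · congr 1
      ext x
      constructor
      · rintro (⟨h, _⟩ | ⟨h, _⟩) <;> exact h
      · intro hx
        have : x ∈ C₁ ∪ C₂ := by rw [hpart]; trivial
        rcases this with h | h
        · exact Or.inl ⟨hx, h⟩
        · exact Or.inr ⟨hx, h⟩
    · exact hdisj.mono Set.inter_subset_right Set.inter_subset_right
  have hDk : D.ncard ≤ k := by omega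
  -- D.ncard ≥ k using domination at some vertex
  have hα1 : 1 ≤ indepNumOn (auxGraph G C₁ C₂) C₁ := one_le_indepNumOn _ hne1
  obtain ⟨c, hc⟩ := hne1
  have hge : k ≤ D.ncard :=
    (hD c).trans (Set.ncard_le_ncard Set.inter_subset_right (Set.toFinite _))
  -- hence D ∩ C₁ nonempty
  have hd1pos : 1 ≤ (D ∩ C₁).ncard := by omega
  obtain ⟨u, hu⟩ := Set.nonempty_of_ncard_ne_zero (by omega : (D ∩ C₁).ncard ≠ 0)
  refine hnouniv u fun w hw => ?_
  have : w ∈ C₁ ∪ C₂ := by rw [hpart]; trivial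
  rcases this with h | h
  · exact hc1 hu.2 h (Ne.symm hw)
  · exact (adj_all_of_small hpart hdisj hD hDk h hu).symm

/-- Construction step: `v ∈ C₂` sees at least `k` vertices of the constructed set. -/
lemma dom_side {V : Type*} [Fintype V] {G : SimpleGraph V} {C₁ C₂ : Set V}
    (hdisj : Disjoint C₁ C₂) (hc2 : G.IsClique C₂)
    {S₁ S₂ : Set V} (hS1C : S₁ ⊆ C₁) (hS2C : S₂ ⊆ C₂)
    (hS1 : IsStableIn (auxGraph G C₁ C₂) S₁)
    {x₁ x₂ : V} (hx1 : x₁ ∈ C₁) (hx2 : x₂ ∈ C₂)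
    {v : V} (hv : v ∈ C₂) :
    S₁.ncard + (insert x₂ S₂).ncard ≤
      (closedNbhd G v ∩ ((insert x₁ S₁) ∪ (insert x₂ S₂))).ncard + 1 := by
  set A : Set V := insert x₂ S₂
  set B : Set V := S₁ ∩ closedNbhd G v
  have hAC2 : A ⊆ C₂ := insert_subset hx2 hS2C
  have hAN : A ⊆ closedNbhd G v := by
    intro x hx
    rw [mem_closedNbhd]
    by_cases hxv : x = v
    · exact Or.inl hxv
    · exact Or.inr (hc2 hv (hAC2 hx) (Ne.symm hxv))
  -- at most one vertex of S₁ is missed by v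
  have hmiss : (S₁ \ closedNbhd G v).ncard ≤ 1 := by
    rw [Set.ncard_le_one (Set.toFinite _)]
    rintro a ⟨haS, haN⟩ b ⟨hbS, hbN⟩
    by_contra hab
    rw [mem_closedNbhd] at haN hbN
    push_neg at haN hbN
    exact hS1 haS hbS hab ⟨hab, hS1C haS, hS1C hbS, v, hv, haN.2, hbN.2⟩
  have hsplitS : S₁.ncard ≤ B.ncard + 1 := by
    have : S₁.ncard ≤ B.ncard + (S₁ \ closedNbhd G v).ncard := by
      rw [← Set.ncard_union_eq ?_ (Set.toFinite _) (Set.toFinite _)]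
      · exact Set.ncard_le_ncard (fun x hx => by
          by_cases h : x ∈ closedNbhd G v
          · exact Or.inl ⟨hx, h⟩
          · exact Or.inr ⟨hx, h⟩) (Set.toFinite _)
      · exact Set.disjoint_left.2 fun x ⟨_, h1⟩ ⟨_, h2⟩ => h2 h1
    omega
  have hABdisj : Disjoint B A :=
    hdisj.mono (Set.inter_subset_left.trans hS1C) hAC2
  have hsub : B ∪ A ⊆ closedNbhd G v ∩ ((insert x₁ S₁) ∪ A) := by
    rintro x (⟨hx1', hx2'⟩ | hx)
    · exact ⟨hx2', Or.inl (Set.mem_insert_of_mem _ hx1')⟩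
    · exact ⟨hAN hx, Or.inr hx⟩
  have : B.ncard + A.ncard ≤ (closedNbhd G v ∩ ((insert x₁ S₁) ∪ A)).ncard := by
    rw [← Set.ncard_union_eq hABdisj (Set.toFinite _) (Set.toFinite _)]
    exact Set.ncard_le_ncard hsub (Set.toFinite _)
  omega

theorem stmt_10 {V : Type*} [Fintype V] (G : SimpleGraph V) (C₁ C₂ : Set V)
    (hpart : C₁ ∪ C₂ = Set.univ) (hdisj : Disjoint C₁ C₂)
    (hne1 : C₁.Nonempty) (hne2 : C₂.Nonempty)
    (hc1 : G.IsClique C₁) (hc2 : G.IsClique C₂)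
    (hnouniv : ∀ v : V, ¬ IsUniversal G v)
    (k : ℕ)
    (hsum : indepNumOn (auxGraph G C₁ C₂) C₁ + indepNumOn (auxGraph G C₂ C₁) C₂ = k)
    (hC1 : indepNumOn (auxGraph G C₁ C₂) C₁ + 1 ≤ C₁.ncard)
    (hC2 : indepNumOn (auxGraph G C₂ C₁) C₂ + 1 ≤ C₂.ncard) :
    ktupleDomNum G k = k + 2 := by
  set α₁ := indepNumOn (auxGraph G C₁ C₂) C₁ with hα₁
  set α₂ := indepNumOn (auxGraph G C₂ C₁) C₂ with hα₂
  have hpart' : C₂ ∪ C₁ = Set.univ := by rw [Set.union_comm]; exact hpart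
  -- maximum stable sets
  obtain ⟨S₁, hS1C, hS1, hS1card⟩ := exists_max_stable (auxGraph G C₁ C₂) C₁
  obtain ⟨S₂, hS2C, hS2, hS2card⟩ := exists_max_stable (auxGraph G C₂ C₁) C₂
  obtain ⟨x₁, hx1C, hx1S⟩ : ∃ x ∈ C₁, x ∉ S₁ :=
    Set.exists_mem_notMem_of_ncard_lt_ncard (by omega)
  obtain ⟨x₂, hx2C, hx2S⟩ : ∃ x ∈ C₂, x ∉ S₂ :=
    Set.exists_mem_notMem_of_ncard_lt_ncard (by omega)
  have hT1card : (insert x₁ S₁).ncard = α₁ + 1 := by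
    rw [Set.ncard_insert_of_notMem hx1S (Set.toFinite _), hS1card]
  have hT2card : (insert x₂ S₂).ncard = α₂ + 1 := by
    rw [Set.ncard_insert_of_notMem hx2S (Set.toFinite _), hS2card]
  have hT1C : insert x₁ S₁ ⊆ C₁ := insert_subset hx1C hS1C
  have hT2C : insert x₂ S₂ ⊆ C₂ := insert_subset hx2C hS2C
  have hDcard : ((insert x₁ S₁) ∪ (insert x₂ S₂)).ncard = k + 2 := by
    rw [Set.ncard_union_eq (hdisj.mono hT1C hT2C) (Set.toFinite _) (Set.toFinite _),
      hT1card, hT2card]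
    omega
  have hDdom : IsKTupleDomSet G k ((insert x₁ S₁) ∪ (insert x₂ S₂)) := by
    intro v
    have hv : v ∈ C₁ ∪ C₂ := by rw [hpart]; trivial
    rcases hv with hv | hv
    · have h := dom_side hdisj.symm hc1 hS2C hS1C hS2 hx2C hx1C hv
      rw [Set.union_comm (insert x₂ S₂), hS2card, hT1card] at h
      omega
    · have h := dom_side hdisj hc2 hS1C hS2C hS1 hx1C hx2C hv
      rw [hS1card, hT2card] at h
      omega
  have hmem : k + 2 ∈ {d | ∃ D : Set V, IsKTupleDomSet G k D ∧ D.ncard = d} :=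
    ⟨_, hDdom, hDcard⟩
  refine le_antisymm (Nat.sInf_le hmem) (le_csInf ⟨_, hmem⟩ ?_)
  rintro d ⟨D', hD', rfl⟩
  exact lower_bound hpart hdisj hne1 hne2 hc1 hc2 hnouniv hsum hD'
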